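/- Let V be a finite-dimensional real inner product space, let Δ ⊂ V be a finite set of nonzero vectors with Δ = −Δ, and suppose the inner product satisfies ⟨x,y⟩ = Σ_{α∈Δ} ⟨α,x⟩⟨α,y⟩ for all x, y ∈ V. Let δ ∈ Δ be such that for every α ∈ Δ with α ≠ δ and α ≠ −δ, the number 2⟨α,δ⟩/⟨δ,δ⟩ belongs to {−1, 0, 1}. Then ⟨δ,δ⟩ = 4 / ( |Δ| − |{α ∈ Δ : ⟨α,δ⟩ = 0}| + 6 ). -/

import Mathlib

open scoped RealInnerProductSpace

open scoped Classical in
/-- Lemma 3.1: if the inner product is the Killing-form inner product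
(`⟨x,y⟩ = Σ_{α∈Δ} ⟨α,x⟩⟨α,y⟩`), `Δ = −Δ` consists of nonzero vectors, and
`2⟨α,δ⟩/⟨δ,δ⟩ ∈ {−1,0,1}` for every `α ∈ Δ` other than `±δ`, then
`⟨δ,δ⟩ = 4/(|Δ| − |Δ ∩ δ^⊥| + 6)`. -/
theorem stmt15 {V : Type*} [NormedAddCommGroup V] [InnerProductSpace ℝ V]
    [FiniteDimensional ℝ V]
    (Δ : Finset V) (h0 : (0 : V) ∉ Δ) (hsym : ∀ α : V, α ∈ Δ ↔ -α ∈ Δ)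
    (hkilling : ∀ x y : V, ⟪x, y⟫ = ∑ α ∈ Δ, ⟪α, x⟫ * ⟪α, y⟫)
    (δ : V) (hδ : δ ∈ Δ)
    (hcartan : ∀ α ∈ Δ, α ≠ δ → α ≠ -δ →
      2 * ⟪α, δ⟫ / ⟪δ, δ⟫ = -1 ∨ 2 * ⟪α, δ⟫ / ⟪δ, δ⟫ = 0 ∨
        2 * ⟪α, δ⟫ / ⟪δ, δ⟫ = 1) :
    ⟪δ, δ⟫ = 4 / ((Δ.card : ℝ) -
      ((Δ.filter fun α => ⟪α, δ⟫ = 0).card : ℝ) + 6) := by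
  have hδ0 : δ ≠ 0 := fun h => h0 (h ▸ hδ)
  set s := ⟪δ, δ⟫ with hs_def
  have hs : 0 < s :=
    lt_of_le_of_ne real_inner_self_nonneg
      (fun h => hδ0 ((inner_self_eq_zero (𝕜 := ℝ)).1 h.symm))
  have hnegδ : -δ ∈ Δ := (hsym δ).1 hδ
  have hne : δ ≠ -δ := by
    intro h
    apply hδ0
    have h2 : (2 : ℝ) • δ = 0 := by
      rw [two_smul]
      nth_rewrite 2 [h]
      simp
    simpa using (smul_eq_zero.1 h2).resolve_left (by norm_num)
  set T := Δ.filter (fun α => ⟪α, δ⟫ = 0) with hT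
  set S := Δ.filter (fun α => ¬ ⟪α, δ⟫ = 0) with hS
  have hδS : δ ∈ S := by
    simp only [hS, Finset.mem_filter]
    exact ⟨hδ, ne_of_gt hs⟩
  have hnegδS : -δ ∈ S := by
    simp only [hS, Finset.mem_filter]
    refine ⟨hnegδ, ?_⟩
    rw [inner_neg_left]
    exact neg_ne_zero.2 (ne_of_gt hs)
  have hP : ({δ, -δ} : Finset V) ⊆ S := by
    intro x hx
    rcases Finset.mem_insert.1 hx with h | h
    · exact h ▸ hδS
    · exact (Finset.mem_singleton.1 h) ▸ hnegδS
  set S' := S \ ({δ, -δ} : Finset V) with hS'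
  -- each α in S' contributes s^2/4
  have hcontrib : ∀ α ∈ S', ⟪α, δ⟫ * ⟪α, δ⟫ = s * s / 4 := by
    intro α hα
    simp only [hS', Finset.mem_sdiff, hS, Finset.mem_filter, Finset.mem_insert,
      Finset.mem_singleton, not_or] at hα
    obtain ⟨⟨hαΔ, hα0⟩, hα1, hα2⟩ := hα
    rcases hcartan α hαΔ hα1 hα2 with h | h | h
    · have : ⟪α, δ⟫ = -s / 2 := by
        field_simp at h
        linarith
      rw [this]; ring
    · exfalso
      apply hα0
      field_simp at h
      try exact h
      linarith
    · have : ⟪α, δ⟫ = s / 2 := by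
        field_simp at h
        linarith
      rw [this]; ring
  have hsum : s = ∑ α ∈ Δ, ⟪α, δ⟫ * ⟪α, δ⟫ := hkilling δ δ
  have hsplit : ∑ α ∈ Δ, ⟪α, δ⟫ * ⟪α, δ⟫ =
      (∑ α ∈ T, ⟪α, δ⟫ * ⟪α, δ⟫) + ∑ α ∈ S, ⟪α, δ⟫ * ⟪α, δ⟫ :=
    (Finset.sum_filter_add_sum_filter_not Δ _ _).symm
  have hTzero : ∑ α ∈ T, ⟪α, δ⟫ * ⟪α, δ⟫ = 0 := by
    apply Finset.sum_eq_zero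
    intro α hα
    rw [hT, Finset.mem_filter] at hα
    rw [hα.2]; ring
  have hSsplit : ∑ α ∈ S', ⟪α, δ⟫ * ⟪α, δ⟫ + ∑ α ∈ ({δ, -δ} : Finset V), ⟪α, δ⟫ * ⟪α, δ⟫
      = ∑ α ∈ S, ⟪α, δ⟫ * ⟪α, δ⟫ := Finset.sum_sdiff hP
  have hpair : ∑ α ∈ ({δ, -δ} : Finset V), ⟪α, δ⟫ * ⟪α, δ⟫ = 2 * (s * s) := by
    rw [Finset.sum_pair hne, inner_neg_left]
    ring
  have hS'sum : ∑ α ∈ S', ⟪α, δ⟫ * ⟪α, δ⟫ = (S'.card : ℝ) * (s * s / 4) := by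
    rw [Finset.sum_congr rfl hcontrib, Finset.sum_const, nsmul_eq_mul]
  -- cards
  have hcardP : ({δ, -δ} : Finset V).card = 2 := by
    rw [Finset.card_insert_of_notMem (by simpa using hne), Finset.card_singleton]
  have hcardS' : (S'.card : ℝ) = (S.card : ℝ) - 2 := by
    rw [hS', Finset.card_sdiff_of_subset hP, hcardP]
    have : 2 ≤ S.card := hcardP ▸ Finset.card_le_card hP
    push_cast [Nat.cast_sub this]
    ring
  have hcards : (T.card : ℝ) + (S.card : ℝ) = (Δ.card : ℝ) := by
    rw [← Nat.cast_add]
    norm_cast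
    exact Finset.card_filter_add_card_filter_not _
  -- final algebra
  have key : s = ((S.card : ℝ) - 2) * (s * s / 4) + 2 * (s * s) := by
    have h := hsum
    rw [hsplit, hTzero, ← hSsplit, hpair, hS'sum, hcardS'] at h
    linear_combination h
  have hScard_nonneg : (0 : ℝ) ≤ (S.card : ℝ) := Nat.cast_nonneg _
  have hden : (Δ.card : ℝ) - (T.card : ℝ) + 6 = (S.card : ℝ) + 6 := by linarith
  rw [hden]
  have hden0 : (S.card : ℝ) + 6 ≠ 0 := by linarith
  have hs0 : s ≠ 0 := ne_of_gt hs
  have h4 : s * ((S.card : ℝ) + 6) = 4 := by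
    have h' : s * (s * ((S.card : ℝ) + 6)) = s * 4 := by linear_combination (-4) * key
    exact mul_left_cancel₀ hs0 h'
  rw [eq_div_iff hden0]
  exact h4
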